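/- The automorphism group of G acts transitively on the edges of G: for any two edges {x,y} and {u,v} of G, there exists a graph automorphism θ of G with θ({x,y}) = {u,v}. -/

import Mathlib

open SimpleGraph

/-- The set of nonzero cubes in a field. -/
def cubes (F : Type) [Field F] : Set F := {s | ∃ x : F, x ≠ 0 ∧ x ^ 3 = s}

/-- The Cayley graph on `F` with connection set the nonzero cubes:
`x ~ y` iff `x - y` is a nonzero cube. -/
def cayley (F : Type) [Field F] : SimpleGraph F :=
  SimpleGraph.fromRel (fun x y => x - y ∈ cubes F)

/-- `v : Fin n → V` is an induced path on `n` vertices in `G`. -/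
def IsInducedPath {V : Type} (G : SimpleGraph V) {n : ℕ} (v : Fin n → V) : Prop :=
  Function.Injective v ∧
    ∀ i j : Fin n, G.Adj (v i) (v j) ↔ (i.val + 1 = j.val ∨ j.val + 1 = i.val)

lemma cubes_mul {F : Type} [Field F] {a b : F} (ha : a ∈ cubes F) (hb : b ∈ cubes F) :
    a * b ∈ cubes F := by
  obtain ⟨p, hp, rfl⟩ := ha; obtain ⟨q, hq, rfl⟩ := hb
  exact ⟨p * q, mul_ne_zero hp hq, by ring⟩

lemma cubes_inv {F : Type} [Field F] {a : F} (ha : a ∈ cubes F) : a⁻¹ ∈ cubes F := by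
  obtain ⟨p, hp, rfl⟩ := ha
  exact ⟨p⁻¹, inv_ne_zero hp, by rw [inv_pow]⟩

lemma cubes_ne_zero {F : Type} [Field F] {a : F} (ha : a ∈ cubes F) : a ≠ 0 := by
  obtain ⟨p, hp, rfl⟩ := ha
  exact pow_ne_zero _ hp

lemma cubes_mul_iff {F : Type} [Field F] {c : F} (hc : c ∈ cubes F) (s : F) :
    c * s ∈ cubes F ↔ s ∈ cubes F := by
  constructor
  · intro h
    have := cubes_mul (cubes_inv hc) h
    rwa [← mul_assoc, inv_mul_cancel₀ (cubes_ne_zero hc), one_mul] at this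
  · exact fun hs => cubes_mul hc hs

lemma cubes_neg_iff {F : Type} [Field F] (s : F) : -s ∈ cubes F ↔ s ∈ cubes F := by
  have h1 : (-1 : F) ∈ cubes F := ⟨-1, neg_ne_zero.mpr one_ne_zero, by ring⟩
  have := cubes_mul_iff h1 s
  simpa using this

lemma cayley_adj {F : Type} [Field F] (a b : F) :
    (cayley F).Adj a b ↔ a ≠ b ∧ a - b ∈ cubes F := by
  rw [cayley, fromRel_adj]
  constructor
  · rintro ⟨hne, h | h⟩
    · exact ⟨hne, h⟩
    · refine ⟨hne, ?_⟩
      have := (cubes_neg_iff (b - a)).mpr h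
      simpa using this
  · rintro ⟨hne, h⟩
    exact ⟨hne, Or.inl h⟩

theorem stmt5 (F : Type) [Field F] [Fintype F] (hF : Fintype.card F = 16)
    (x y u v : F) (hxy : (cayley F).Adj x y) (huv : (cayley F).Adj u v) :
    ∃ θ : cayley F ≃g cayley F, (θ x = u ∧ θ y = v) ∨ (θ x = v ∧ θ y = u) := by
  rw [cayley_adj] at hxy huv
  obtain ⟨hxyne, hxyc⟩ := hxy
  obtain ⟨huvne, huvc⟩ := huv
  have hyx : y - x ≠ 0 := sub_ne_zero.mpr (Ne.symm hxyne)
  set c : F := (v - u) * (y - x)⁻¹ with hc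
  have hcc : c ∈ cubes F := by
    apply cubes_mul
    · have := (cubes_neg_iff (u - v)).mpr huvc; simpa using this
    · apply cubes_inv
      have := (cubes_neg_iff (x - y)).mpr hxyc; simpa using this
  have hcne : c ≠ 0 := cubes_ne_zero hcc
  refine ⟨⟨⟨fun z => c * (z - x) + u, fun z => c⁻¹ * (z - u) + x, ?_, ?_⟩, ?_⟩,
    Or.inl ⟨?_, ?_⟩⟩
  · intro z; field_simp; try ring
  · intro z; field_simp; try ring
  · intro a b
    simp only [Equiv.coe_fn_mk]
    rw [cayley_adj, cayley_adj]
    have hdiff : (c * (a - x) + u) - (c * (b - x) + u) = c * (a - b) := by ring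
    rw [hdiff, cubes_mul_iff hcc]
    constructor
    · rintro ⟨hne, h⟩
      exact ⟨by intro hab; apply hne; rw [hab], h⟩
    · rintro ⟨hne, h⟩
      refine ⟨?_, h⟩
      intro heq
      apply hne
      have : c * (a - x) = c * (b - x) := by
        have := add_right_cancel heq; exact this
      have := mul_left_cancel₀ hcne this
      have := sub_left_injective this
      exact this
  · show c * (x - x) + u = u; ring
  · show c * (y - x) + u = v
    rw [hc]
    field_simp
    ring
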